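/- arXiv:2507.10956 — 2 statements merged into one kernel-verified Lean document; each statement's English description precedes it below -/
import Mathlib

section
/- Let W^t, W^{t+1} ∈ R^{d×c} have all rows nonzero, let D^t be diagonal with D^t_{ii} = 1/(2||w_i^t||_2). If ||X W^{t+1} - F||_F^2 + β Tr((W^{t+1})' D^t W^{t+1}) ≤ ||X W^t - F||_F^2 + β Tr((W^t)' D^t W^t) with β > 0, then ||X W^{t+1} - F||_F^2 + β ||W^{t+1}||_{2,1} ≤ ||X W^t - F||_F^2 + β ||W^t||_{2,1}. -/
open Matrix

lemma trace_diag_quad {d c : ℕ} (dg : Fin d → ℝ) (W : Matrix (Fin d) (Fin c) ℝ) :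
    Matrix.trace (Wᵀ * Matrix.diagonal dg * W) = ∑ i, dg i * ∑ j, (W i j) ^ 2 := by
  simp only [Matrix.trace, Matrix.diag, Matrix.mul_apply, Matrix.transpose_apply,
    Matrix.diagonal_apply, mul_ite, mul_zero, ite_mul, zero_mul,
    Finset.sum_ite_eq, Finset.sum_ite_eq', Finset.mem_univ, if_true]
  rw [Finset.sum_comm]
  refine Finset.sum_congr rfl fun i _ => ?_
  rw [Finset.mul_sum]
  refine Finset.sum_congr rfl fun k _ => ?_
  ring

theorem l21_descent (n d c : ℕ)
    (X : Matrix (Fin n) (Fin d) ℝ) (F : Matrix (Fin n) (Fin c) ℝ)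
    (β : ℝ) (hβ : 0 < β)
    (Wt Wt1 : Matrix (Fin d) (Fin c) ℝ)
    (hWt : ∀ i, Wt i ≠ 0) (hWt1 : ∀ i, Wt1 i ≠ 0)
    (Dt : Matrix (Fin d) (Fin d) ℝ)
    (hDt : Dt = Matrix.diagonal (fun i => 1 / (2 * Real.sqrt (∑ j, (Wt i j) ^ 2))))
    (hdec : Matrix.trace ((X * Wt1 - F)ᵀ * (X * Wt1 - F)) +
        β * Matrix.trace (Wt1ᵀ * Dt * Wt1) ≤
      Matrix.trace ((X * Wt - F)ᵀ * (X * Wt - F)) +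
        β * Matrix.trace (Wtᵀ * Dt * Wt)) :
    Matrix.trace ((X * Wt1 - F)ᵀ * (X * Wt1 - F)) +
        β * ∑ i, Real.sqrt (∑ j, (Wt1 i j) ^ 2) ≤
      Matrix.trace ((X * Wt - F)ᵀ * (X * Wt - F)) +
        β * ∑ i, Real.sqrt (∑ j, (Wt i j) ^ 2) := by
  subst hDt
  rw [trace_diag_quad, trace_diag_quad] at hdec
  -- row norms of Wt
  have hs : ∀ i, 0 < Real.sqrt (∑ j, (Wt i j) ^ 2) := by
    intro i
    apply Real.sqrt_pos.2
    have h0 : ∃ j, Wt i j ≠ 0 := by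
      by_contra h
      push_neg at h
      exact hWt i (funext h)
    obtain ⟨j, hj⟩ := h0
    have : (0:ℝ) < (Wt i j) ^ 2 := by positivity
    calc (0:ℝ) < (Wt i j) ^ 2 := this
      _ ≤ ∑ j, (Wt i j) ^ 2 := Finset.single_le_sum (f := fun k => (Wt i k)^2) (fun k _ => sq_nonneg _) (Finset.mem_univ j)
  -- key rowwise inequality: √v1 - v1/(2s) ≤ √vt - vt/(2s) = s/2
  have key : ∀ (W : Matrix (Fin d) (Fin c) ℝ),
      ∑ i, Real.sqrt (∑ j, (W i j) ^ 2) -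
        ∑ i, (1 / (2 * Real.sqrt (∑ j, (Wt i j) ^ 2))) * ∑ j, (W i j) ^ 2 ≤
      ∑ i, Real.sqrt (∑ j, (Wt i j) ^ 2) / 2 := by
    intro W
    rw [← Finset.sum_sub_distrib]
    apply Finset.sum_le_sum
    intro i _
    set s := Real.sqrt (∑ j, (Wt i j) ^ 2) with hsdef
    have hsi := hs i
    set v := ∑ j, (W i j) ^ 2 with hvdef
    have hv : 0 ≤ v := Finset.sum_nonneg fun j _ => sq_nonneg _
    have hsq : (Real.sqrt v) ^ 2 = v := Real.sq_sqrt hv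
    have hineq : 2 * s * Real.sqrt v ≤ v + s ^ 2 := by
      nlinarith [sq_nonneg (Real.sqrt v - s)]
    have hfac : (0:ℝ) ≤ 1 / (2 * s) * (v + s ^ 2 - 2 * s * Real.sqrt v) :=
      mul_nonneg (by positivity) (by linarith)
    have expand : 1 / (2 * s) * (v + s ^ 2 - 2 * s * Real.sqrt v)
        = 1 / (2 * s) * v + s / 2 - Real.sqrt v := by
      have hs0 : s ≠ 0 := ne_of_gt hsi
      field_simp
    linarith [hfac, expand.symm.le, expand.le]
  have k1 := key Wt1
  have kt : ∑ i, Real.sqrt (∑ j, (Wt i j) ^ 2) -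
      ∑ i, (1 / (2 * Real.sqrt (∑ j, (Wt i j) ^ 2))) * ∑ j, (Wt i j) ^ 2 =
      ∑ i, Real.sqrt (∑ j, (Wt i j) ^ 2) / 2 := by
    rw [← Finset.sum_sub_distrib]
    refine Finset.sum_congr rfl fun i _ => ?_
    have hsi := hs i
    have hsum : (∑ j, (Wt i j) ^ 2) = (Real.sqrt (∑ j, (Wt i j) ^ 2)) ^ 2 :=
      (Real.sq_sqrt (Finset.sum_nonneg fun j _ => sq_nonneg _)).symm
    have h2 : 1 / (2 * Real.sqrt (∑ j, (Wt i j) ^ 2)) * ∑ j, (Wt i j) ^ 2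
        = Real.sqrt (∑ j, (Wt i j) ^ 2) / 2 := by
      rw [hsum]
      field_simp
      simp [Real.sqrt_sq hsi.le]
    rw [h2]
    ring
  nlinarith [k1, kt, hdec, hβ]
end

section
/- For X ∈ R^{n×d} and a symmetric positive definite matrix B ∈ R^{d×d}, the eigenvalues of H = X B^{-1} X' lie in [0, ∞), and if B = X'X + βD with β > 0 and D positive definite diagonal, then all eigenvalues of H are in [0, 1); consequently Tr(F' (I_n - H) F) > 0 for every nonzero F ∈ R^{n×c}. -/
open Matrix

lemma trace_transpose_mul_self_pos' {m c : ℕ} {A : Matrix (Fin m) (Fin c) ℝ} (h : A ≠ 0) :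
    0 < Matrix.trace (Aᵀ * A) := by
  obtain ⟨i0, hi0⟩ := Function.ne_iff.mp h
  obtain ⟨j0, hj0⟩ := Function.ne_iff.mp hi0
  have htr : Matrix.trace (Aᵀ * A) = ∑ j, ∑ i, A i j * A i j := by
    simp [Matrix.trace, Matrix.diag, Matrix.mul_apply, Matrix.transpose_apply]
  rw [htr]
  refine Finset.sum_pos' (fun j _ => Finset.sum_nonneg fun i _ => mul_self_nonneg _)
    ⟨j0, Finset.mem_univ _, Finset.sum_pos' (fun i _ => mul_self_nonneg _)
      ⟨i0, Finset.mem_univ _, mul_self_pos.mpr hj0⟩⟩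

theorem hat_matrix_eigenvalues (n d c : ℕ)
    (X : Matrix (Fin n) (Fin d) ℝ)
    (dg : Fin d → ℝ) (hdg : ∀ i, 0 < dg i)
    (D : Matrix (Fin d) (Fin d) ℝ) (hD : D = Matrix.diagonal dg)
    (β : ℝ) (hβ : 0 < β) :
    (∀ B : Matrix (Fin d) (Fin d) ℝ, B.PosDef → B.IsSymm →
      ∃ hH : (X * B⁻¹ * Xᵀ).IsHermitian, ∀ i, 0 ≤ hH.eigenvalues i) ∧
    (∃ hH : (X * (Xᵀ * X + β • D)⁻¹ * Xᵀ).IsHermitian,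
      (∀ i, 0 ≤ hH.eigenvalues i ∧ hH.eigenvalues i < 1) ∧
      ∀ F : Matrix (Fin n) (Fin c) ℝ, F ≠ 0 →
        0 < Matrix.trace (Fᵀ * (1 - X * (Xᵀ * X + β • D)⁻¹ * Xᵀ) * F)) := by
  have hXH : (Xᴴ : Matrix (Fin d) (Fin n) ℝ) = Xᵀ :=
    conjTranspose_eq_transpose_of_trivial X
  constructor
  · intro B hB _
    have h1 : (X * B⁻¹ * Xᴴ).PosSemidef := hB.inv.posSemidef.mul_mul_conjTranspose_same X
    rw [hXH] at h1
    exact ⟨h1.isHermitian, h1.eigenvalues_nonneg⟩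
  · set A : Matrix (Fin d) (Fin d) ℝ := β • D with hA
    have hApd : A.PosDef := by
      rw [hA, hD, ← Matrix.diagonal_smul]
      exact Matrix.PosDef.diagonal fun i => by
        have := hdg i; simp only [Pi.smul_apply, smul_eq_mul]; positivity
    set B : Matrix (Fin d) (Fin d) ℝ := Xᵀ * X + A with hB
    have hXtXps : (Xᵀ * X).PosSemidef := by
      have := Matrix.posSemidef_conjTranspose_mul_self X
      rwa [hXH] at this
    have hBpd : B.PosDef := Matrix.PosDef.posSemidef_add hXtXps hApd
    have hHps : (X * B⁻¹ * Xᵀ).PosSemidef := by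
      have := hBpd.inv.posSemidef.mul_mul_conjTranspose_same X
      rwa [hXH] at this
    -- the matrix K = 1 + X A⁻¹ Xᵀ is the inverse of 1 - H
    set K : Matrix (Fin n) (Fin n) ℝ := 1 + X * A⁻¹ * Xᵀ with hK
    have hKpd : K.PosDef := by
      have h2 : (X * A⁻¹ * Xᴴ).PosSemidef := hApd.inv.posSemidef.mul_mul_conjTranspose_same X
      rw [hXH] at h2
      exact Matrix.PosDef.one.add_posSemidef h2
    have hBB : B⁻¹ * B = 1 := Matrix.nonsing_inv_mul B (isUnit_iff_ne_zero.mpr hBpd.det_pos.ne')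
    have hAA : A * A⁻¹ = 1 := Matrix.mul_nonsing_inv A (isUnit_iff_ne_zero.mpr hApd.det_pos.ne')
    have hXtX : Xᵀ * X = B - A := by rw [hB]; abel
    have e1 : X * B⁻¹ * Xᵀ * (X * A⁻¹ * Xᵀ) = X * A⁻¹ * Xᵀ - X * B⁻¹ * Xᵀ := by
      calc X * B⁻¹ * Xᵀ * (X * A⁻¹ * Xᵀ)
          = X * B⁻¹ * ((B - A) * (A⁻¹ * Xᵀ)) := by
            rw [← hXtX]; simp only [Matrix.mul_assoc]
        _ = X * (B⁻¹ * B) * (A⁻¹ * Xᵀ) - X * (B⁻¹ * (A * A⁻¹)) * Xᵀ := by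
            rw [Matrix.sub_mul, Matrix.mul_sub]; simp only [Matrix.mul_assoc]
        _ = X * A⁻¹ * Xᵀ - X * B⁻¹ * Xᵀ := by
            rw [hBB, hAA, Matrix.mul_one, Matrix.mul_one]; simp only [Matrix.mul_assoc]
    have hinv : (1 - X * B⁻¹ * Xᵀ) * K = 1 := by
      rw [hK, Matrix.sub_mul, Matrix.one_mul, Matrix.mul_add, Matrix.mul_one, e1]
      abel
    have hMpd : (1 - X * B⁻¹ * Xᵀ).PosDef := by
      have h2 : K⁻¹ = 1 - X * B⁻¹ * Xᵀ := Matrix.inv_eq_left_inv hinv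
      rw [← h2]; exact hKpd.inv
    refine ⟨hHps.isHermitian, fun i => ?_, fun F hF => ?_⟩
    · refine ⟨hHps.eigenvalues_nonneg i, ?_⟩
      set hH := hHps.isHermitian
      set v : Fin n → ℝ := ⇑(hH.eigenvectorBasis i) with hv
      have hvne : v ≠ 0 := by
        intro h0
        exact hH.eigenvectorBasis.orthonormal.ne_zero i (by ext j; exact congrFun h0 j)
      have hpos := hMpd.dotProduct_mulVec_pos hvne
      rw [star_trivial] at hpos
      have hMv : (1 - X * B⁻¹ * Xᵀ) *ᵥ v = v - hH.eigenvalues i • v := by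
        rw [Matrix.sub_mulVec, Matrix.one_mulVec, hH.mulVec_eigenvectorBasis i]
      rw [hMv] at hpos
      have hd : dotProduct v (v - hH.eigenvalues i • v)
          = (1 - hH.eigenvalues i) * dotProduct v v := by
        rw [dotProduct_sub, dotProduct_smul, smul_eq_mul]; ring
      rw [hd] at hpos
      have hvv : 0 < dotProduct v v := by
        obtain ⟨j, hj⟩ := Function.ne_iff.mp hvne
        exact Finset.sum_pos' (fun k _ => mul_self_nonneg _)
          ⟨j, Finset.mem_univ _, mul_self_pos.mpr hj⟩
      nlinarith
    · set M : Matrix (Fin n) (Fin n) ℝ := 1 - X * B⁻¹ * Xᵀ with hM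
      set S : Matrix (Fin n) (Fin n) ℝ := (open MatrixOrder in CFC.sqrt M) with hS
      have hSS : S * S = M := (open MatrixOrder in CFC.sqrt_mul_sqrt_self M hMpd.posSemidef.nonneg)
      have hSt : Sᵀ = S := by
        have := (open MatrixOrder in (CFC.sqrt_nonneg M).posSemidef.isHermitian)
        rwa [Matrix.IsHermitian, conjTranspose_eq_transpose_of_trivial] at this
      have hSF : S * F ≠ 0 := by
        intro h0
        apply hF
        have hMF : M * F = 0 := by
          rw [← hSS, Matrix.mul_assoc, h0, Matrix.mul_zero]
        have hMM : M⁻¹ * M = 1 :=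
          Matrix.nonsing_inv_mul M (isUnit_iff_ne_zero.mpr hMpd.det_pos.ne')
        calc F = (M⁻¹ * M) * F := by rw [hMM, Matrix.one_mul]
          _ = M⁻¹ * (M * F) := by rw [Matrix.mul_assoc]
          _ = 0 := by rw [hMF, Matrix.mul_zero]
      have heq : Fᵀ * M * F = (S * F)ᵀ * (S * F) := by
        rw [Matrix.transpose_mul, hSt, ← hSS]
        simp only [Matrix.mul_assoc]
      rw [heq]
      exact trace_transpose_mul_self_pos' hSF
end
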